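/- Let Cov_Fib[ℓ] denote the length of the shortest cover of the length-ℓ prefix of the infinite Fibonacci word Fib. For every k ≥ 4, Cov_Fib[2F_k − 1] = 2F_k − 1; that is, the prefix of Fib of length 2F_k − 1 is superprimitive (has no proper cover). -/
import Mathlib


section Defs

variable {α : Type*}

/-- `C` occurs in `T` at starting position `i`. -/
def OccursAt (C T : List α) (i : ℕ) : Prop :=
  i + C.length ≤ T.length ∧ (T.drop i).take C.length = C

/-- `C` is a cover of `T`: `C` occurs in `T` and every position of `T`
lies within an occurrence of `C`. -/
def IsCover (C T : List α) : Prop :=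
  (∃ i, OccursAt C T i) ∧
    ∀ q, q < T.length → ∃ i, OccursAt C T i ∧ i ≤ q ∧ q < i + C.length

/-- A border of `T` is both a prefix and a suffix of `T`. -/
def IsBorder (B T : List α) : Prop := B <+: T ∧ B <:+ T

/-- `p` is a period of `U`: `U[i] = U[i+p]` for all `0 ≤ i < |U| - p`. -/
def IsPeriod (p : ℕ) (U : List α) : Prop :=
  0 < p ∧ ∀ i, i + p < U.length → U[i]? = U[i + p]?

/-- `U` is aperiodic: its smallest period `p` satisfies `2p > |U|`
(equivalently, every period `p` of `U` satisfies `2p > |U|`). -/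
def StrAperiodic (U : List α) : Prop := ∀ p, IsPeriod p U → U.length < 2 * p

/-- A nonempty string `X` is primitive if `X = Y^t` implies `t = 1`. -/
def StrPrimitive (X : List α) : Prop :=
  X ≠ [] ∧ ∀ (Y : List α) (t : ℕ), X = (List.replicate t Y).flatten → t = 1

/-- A string is superprimitive if it has no proper cover. -/
def Superprimitive (T : List α) : Prop :=
  ¬ ∃ C : List α, IsCover C T ∧ C.length < T.length

/-- The length of the shortest cover of `T`. -/
noncomputable def covLen (T : List α) : ℕ :=
  sInf {c | ∃ C : List α, C.length = c ∧ IsCover C T}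

/-- `{a, a+p, ..., a+(t-1)p}` is a maximal arithmetic progression with
difference `p` inside the set `S`. -/
def MaxProg (S : Set ℕ) (p a t : ℕ) : Prop :=
  0 < t ∧ (∀ r, r < t → a + r * p ∈ S) ∧ (∀ b, b + p = a → b ∉ S) ∧ a + t * p ∉ S

end Defs

/-- Fibonacci strings over `Bool` (`true` = a, `false` = b):
`Fib_0 = b`, `Fib_1 = a`, `Fib_m = Fib_{m-1} Fib_{m-2}`. -/
def fibWord : ℕ → List Bool
  | 0 => [false]
  | 1 => [true]
  | (m + 2) => fibWord (m + 1) ++ fibWord m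

/-- Fibonacci numbers `F_k = |Fib_k|`: `F_0 = F_1 = 1`, `F_2 = 2`, `F_3 = 3`, ... -/
def F (k : ℕ) : ℕ := (fibWord k).length

/-- The `n`-th letter of the infinite Fibonacci word (each `Fib_m`, `m ≥ 1`,
is a prefix of the infinite word, and `F_{n+2} > n`). -/
def fibInf (n : ℕ) : Bool := (fibWord (n + 2)).getD n false

/-- The length-`ℓ` prefix `Fib[0..ℓ)` of the infinite Fibonacci word. -/
def fibPrefix (ℓ : ℕ) : List Bool := (List.range ℓ).map fibInf

/-- `Cov_Fib[ℓ]`: the length of the shortest cover of `Fib[0..ℓ)`. -/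
noncomputable def covFib (ℓ : ℕ) : ℕ := covLen (fibPrefix ℓ)

lemma fibWord_succ_succ (m : ℕ) : fibWord (m+2) = fibWord (m+1) ++ fibWord m := rfl

lemma F_add (m : ℕ) : F (m+2) = F (m+1) + F m := by
  simp [F, fibWord_succ_succ]

lemma F_pos : ∀ m, 1 ≤ F m
  | 0 => le_refl 1
  | 1 => le_refl 1
  | (m+2) => by rw [F_add]; have := F_pos m; omega

lemma F_mono_succ (m : ℕ) : F m ≤ F (m+1) := by
  cases m with
  | zero => exact le_refl 1
  | succ m => rw [F_add]; have := F_pos m; omega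

lemma F_le {a b : ℕ} (h : a ≤ b) : F a ≤ F b :=
  monotone_nat_of_le_succ F_mono_succ h

lemma F_lt {a b : ℕ} (ha : 1 ≤ a) (h : a < b) : F a < F b := by
  obtain ⟨u, rfl⟩ : ∃ u, a = u + 1 := ⟨a - 1, by omega⟩
  have h1 : F (u+1) < F (u+2) := by rw [F_add]; have := F_pos u; omega
  exact lt_of_lt_of_le h1 (F_le (by omega))

lemma F_lt_imp {a b : ℕ} (ha : 1 ≤ a) (h : F a < F b) : a < b := by
  by_contra h'
  push_neg at h'
  exact absurd (F_le h') (by omega)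

lemma F_le_one {m : ℕ} (h : m ≤ 1) : F m = 1 := by
  interval_cases m <;> rfl

lemma F_le_two {m : ℕ} (h : m ≤ 2) : F m ≤ 2 := by
  interval_cases m <;> simp [F, fibWord]

lemma two_le_F {m : ℕ} (h : 2 ≤ m) : 2 ≤ F m :=
  le_trans (by rfl) (F_le h)

lemma succ_le_F : ∀ n, n + 1 ≤ F (n+1)
  | 0 => le_refl 1
  | (n+1) => by rw [F_add]; have := succ_le_F n; have := F_pos n; omega

lemma exists_window : ∀ p, 1 ≤ p → ∃ a, 1 ≤ a ∧ F a ≤ p ∧ p < F (a+1) := by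
  intro p hp
  induction p with
  | zero => omega
  | succ n ihn =>
    rcases Nat.eq_zero_or_pos n with rfl | hn
    · exact ⟨1, le_refl 1, le_refl 1, by simp [F, fibWord]⟩
    · obtain ⟨a, ha, h1, h2⟩ := ihn hn
      by_cases h : n + 1 < F (a+1)
      · exact ⟨a, ha, by omega, h⟩
      · have he : n + 1 = F (a+1) := by omega
        exact ⟨a+1, by omega, by omega, he ▸ F_lt (by omega) (by omega)⟩

lemma fibWord_prefix_succ {m : ℕ} (hm : 1 ≤ m) : fibWord m <+: fibWord (m+1) := by
  obtain ⟨e, rfl⟩ : ∃ e, m = e + 1 := ⟨m - 1, by omega⟩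
  exact ⟨fibWord e, rfl⟩

lemma fibWord_prefix_le {a b : ℕ} (ha : 1 ≤ a) (h : a ≤ b) : fibWord a <+: fibWord b := by
  induction b with
  | zero => omega
  | succ b ihb =>
    rcases Nat.eq_or_lt_of_le h with rfl | hlt
    · exact List.prefix_refl _
    · exact (ihb (by omega)).trans (fibWord_prefix_succ (by omega))

lemma getD_of_prefix {l l' : List Bool} (h : l <+: l') {n : ℕ} (hn : n < l.length) :
    l'.getD n false = l.getD n false := by
  obtain ⟨t, rfl⟩ := h
  exact List.getD_append _ _ _ _ hn

lemma fibInf_eq {m n : ℕ} (hm : 1 ≤ m) (hn : n < F m) :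
    fibInf n = (fibWord m).getD n false := by
  have hnn : n < F (n+2) :=
    lt_of_lt_of_le (lt_of_lt_of_le (by omega) (succ_le_F n)) (F_le (by omega))
  have p1 : fibWord m <+: fibWord (max m (n+2)) := fibWord_prefix_le hm (le_max_left _ _)
  have p2 : fibWord (n+2) <+: fibWord (max m (n+2)) :=
    fibWord_prefix_le (by omega) (le_max_right _ _)
  calc fibInf n = (fibWord (n+2)).getD n false := rfl
    _ = (fibWord (max m (n+2))).getD n false := (getD_of_prefix p2 hnn).symm
    _ = (fibWord m).getD n false := getD_of_prefix p1 hn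

lemma star (d t : ℕ) (ht : t < F (d+1)) : fibInf (F (d+2) + t) = fibInf t := by
  have h3 : F (d+3) = F (d+2) + F (d+1) := F_add (d+1)
  have e1 : fibInf (F (d+2) + t) = (fibWord (d+3)).getD (F (d+2) + t) false :=
    fibInf_eq (by omega) (by omega)
  have e2 : fibInf t = (fibWord (d+1)).getD t false := fibInf_eq (by omega) ht
  have hlen : (fibWord (d+2)).length = F (d+2) := rfl
  rw [e1, e2, fibWord_succ_succ (d+1),
    List.getD_append_right _ _ _ _ (by rw [hlen]; omega), hlen]
  congr 1
  omega

lemma star2 (d t : ℕ) (ht : t < F (d+3)) : fibInf (F (d+3) + t) = fibInf t := by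
  have h3 : F (d+3) = F (d+2) + F (d+1) := F_add (d+1)
  by_cases h : t < F (d+2)
  · exact star (d+1) t h
  · push_neg at h
    set s := t - F (d+2) with hs
    have hts : t = F (d+2) + s := by omega
    have hsF : s < F (d+1) := by omega
    have h4 : F (d+4) = F (d+3) + F (d+2) := F_add (d+2)
    have e1 : F (d+3) + t = F (d+4) + s := by omega
    rw [e1, star (d+2) s (lt_of_lt_of_le hsF (F_le (by omega))), hts,
      star d s hsF]

lemma dag : ∀ b, 1 ≤ b → fibInf (F (b+1) - 2) ≠ fibInf (F (b+2) - 2) := by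
  intro b
  induction b using Nat.strong_induction_on with
  | _ b ih =>
    match b with
    | 0 => intro h; exact absurd h (by omega)
    | 1 => intro _; decide
    | 2 => intro _; decide
    | (e+3) =>
      intro _
      have h2a : 2 ≤ F (e+2) := two_le_F (by omega)
      have h2b : 2 ≤ F (e+3) := two_le_F (by omega)
      have r4 : F (e+4) = F (e+3) + F (e+2) := F_add (e+2)
      have r5 : F (e+5) = F (e+4) + F (e+3) := F_add (e+3)
      have hmono : F (e+2) ≤ F (e+3) := F_le (by omega)
      have hb1 : F (e+2) - 2 < F (e+3) := by omega
      have hb2 : F (e+3) - 2 < F (e+4) := by omega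
      have h1 : fibInf (F (e+4) - 2) = fibInf (F (e+2) - 2) := by
        have heq : F (e+4) - 2 = F (e+3) + (F (e+2) - 2) := by omega
        rw [heq]
        exact star2 e (F (e+2) - 2) hb1
      have h2 : fibInf (F (e+5) - 2) = fibInf (F (e+3) - 2) := by
        have heq : F (e+5) - 2 = F (e+4) + (F (e+3) - 2) := by omega
        rw [heq]
        exact star2 (e+1) (F (e+3) - 2) hb2
      show fibInf (F (e+4) - 2) ≠ fibInf (F (e+5) - 2)
      rw [h1, h2]
      exact ih (e+1) (by omega) (by omega)

lemma keyM : ∀ p, 1 ≤ p → ∃ b c, 1 ≤ b ∧ b ≤ c ∧ F c ≤ p ∧ p + F (b-1) ≤ F (c+1) ∧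
    fibInf (F (b+1) - 2) ≠ fibInf (F (b+1) - 2 + p) := by
  intro p
  induction p using Nat.strong_induction_on with
  | _ p ih =>
    intro hp
    obtain ⟨c, hc1, hcF, hcF'⟩ := exists_window p hp
    rcases Nat.eq_or_lt_of_le hcF with heq | hgt
    · -- p = F c
      obtain ⟨w, rfl⟩ : ∃ w, c = w + 1 := ⟨c - 1, by omega⟩
      have r2 : F (w+2) = F (w+1) + F w := F_add w
      have r3 : F (w+3) = F (w+2) + F (w+1) := F_add (w+1)
      have h2 : 2 ≤ F (w+2) := two_le_F (by omega)
      refine ⟨w+1, w+1, by omega, le_refl _, hcF, ?_, ?_⟩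
      · show p + F w ≤ F (w+2)
        omega
      · show fibInf (F (w+2) - 2) ≠ fibInf (F (w+2) - 2 + p)
        have key : F (w+2) - 2 + p = F (w+3) - 2 := by omega
        rw [key]
        exact dag (w+1) (by omega)
    · -- F c < p
      have hc3 : 3 ≤ c := by
        by_contra hlt
        interval_cases c
        · simp [F, fibWord] at hgt hcF'; omega
        · simp [F, fibWord] at hgt hcF'; omega
      obtain ⟨u, rfl⟩ : ∃ u, c = u + 3 := ⟨c - 3, by omega⟩
      have hcF2 : p < F (u+4) := hcF'
      have r4 : F (u+4) = F (u+3) + F (u+2) := F_add (u+2)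
      have hpos3 : 1 ≤ F (u+3) := F_pos _
      set q := p - F (u+3) with hq
      have hq1 : 1 ≤ q := by omega
      have hqlt : q < F (u+2) := by omega
      obtain ⟨b', c', hb1, hbc, hcq, hsum, hne⟩ := ih q (by omega) hq1
      have hc'2 : c' + 2 ≤ u + 3 := by
        have : c' < u + 2 := F_lt_imp (by omega) (lt_of_le_of_lt hcq hqlt)
        omega
      obtain ⟨w, rfl⟩ : ∃ w, b' = w + 1 := ⟨b' - 1, by omega⟩
      have hsum' : q + F w ≤ F (c'+1) := hsum
      have hne' : fibInf (F (w+2) - 2) ≠ fibInf (F (w+2) - 2 + q) := hne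
      have h2b : 2 ≤ F (w+2) := two_le_F (by omega)
      have rb : F (w+2) = F (w+1) + F w := F_add w
      have rc : F (c'+2) = F (c'+1) + F c' := F_add c'
      have hFb : F (w+1) ≤ F c' := F_le (by omega)
      have hFc2 : F (c'+2) ≤ F (u+3) := F_le (by omega)
      have hFc1 : F (c'+1) ≤ F (u+2) := F_le (by omega)
      have hxq : (F (w+2) - 2) + q + 2 ≤ F (u+3) := by omega
      refine ⟨w+1, u+3, by omega, by omega, by omega, ?_, ?_⟩
      · show p + F w ≤ F (u+4)
        omega
      · show fibInf (F (w+2) - 2) ≠ fibInf (F (w+2) - 2 + p)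
        have hxp : F (w+2) - 2 + p = F (u+3) + (F (w+2) - 2 + q) := by omega
        rw [hxp, star2 u (F (w+2) - 2 + q) (by omega)]
        exact hne'

lemma periodBound {p m a : ℕ} (ha : 1 ≤ a) (h1 : F a ≤ p) (h2 : p < F (a+1))
    (hper : ∀ i, i + p < m → fibInf i = fibInf (i + p)) : m + 2 ≤ p + F (a+1) := by
  by_contra h
  push_neg at h
  obtain ⟨b, c, hb1, hbc, hcp, hsum, hne⟩ := keyM p (le_trans (F_pos a) h1)
  have hca : c ≤ a := by
    have : c < a + 1 := F_lt_imp (by omega) (lt_of_le_of_lt hcp h2)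
    omega
  have hba : F (b+1) ≤ F (a+1) := F_le (by omega)
  have h2b : 2 ≤ F (b+1) := two_le_F (by omega)
  exact hne (hper (F (b+1) - 2) (by omega))

lemma chain : ∀ j, 2 ≤ j → ∀ c s, 1 ≤ c → s + c + 1 = F j →
    (∀ x, x < c → fibInf (s + x) = fibInf x) → ∃ i, 2 ≤ i ∧ c + 1 = F i := by
  intro j
  induction j using Nat.strong_induction_on with
  | _ j ih =>
    intro h2j c s hc hsum hsuf
    rcases Nat.eq_zero_or_pos s with rfl | hs
    · exact ⟨j, h2j, by simpa using hsum⟩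
    -- the period function
    have hper : ∀ y, y + s < s + c → fibInf y = fibInf (y + s) := by
      intro y hy
      have := hsuf y (by omega)
      rw [Nat.add_comm s y] at this
      exact this.symm
    have hj3 : 3 ≤ j := by
      rcases Nat.eq_or_lt_of_le h2j with rfl | h
      · exfalso
        have : F 2 = 2 := rfl
        omega
      · omega
    obtain ⟨u, rfl⟩ : ∃ u, j = u + 3 := ⟨j - 3, by omega⟩
    have r3 : F (u+3) = F (u+2) + F (u+1) := F_add (u+1)
    have r2 : F (u+2) = F (u+1) + F u := F_add u
    rcases lt_trichotomy s (F (u+2)) with hlt | heq | hgt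
    · -- s < F (u+2) : impossible
      exfalso
      obtain ⟨a, ha1, haF, haF'⟩ := exists_window s hs
      have haj : a + 1 ≤ u + 2 := by
        have : a < u + 2 := F_lt_imp ha1 (lt_of_le_of_lt haF hlt)
        omega
      have hPB : (s + c) + 2 ≤ s + F (a+1) := periodBound ha1 haF haF' hper
      by_cases hcase : a + 1 ≤ u + 1
      · have : F (a+1) ≤ F (u+1) := F_le hcase
        omega
      · have hFa : F (a+1) = F (u+2) := by
          have : a + 1 = u + 2 := by omega
          rw [this]
        have hs2 : F (u+1) + 1 ≤ s := by omega
        -- window is nonempty: F (u+1) + 1 ≤ s ≤ F (u+2) - 1, so F u ≥ 2, u ≥ 2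
        have hu2 : 2 ≤ u := by
          by_contra hu
          have : F u = 1 := F_le_one (by omega)
          omega
        obtain ⟨v, rfl⟩ : ∃ v, u = v + 2 := ⟨u - 2, by omega⟩
        have R5 : F (v+5) = F (v+4) + F (v+3) := F_add (v+3)
        have R4 : F (v+4) = F (v+3) + F (v+2) := F_add (v+2)
        have R3 : F (v+3) = F (v+2) + F (v+1) := F_add (v+1)
        have hsum' : s + c + 1 = F (v+5) := hsum
        have hs2' : F (v+3) + 1 ≤ s := hs2
        have hlt' : s < F (v+4) := hlt
        set d := F (v+4) - s with hd
        have hd1 : 1 ≤ d := by omega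
        have hdlt : d < F (v+2) := by omega
        have hperd : ∀ y, y + d < (F (v+3) - 1) + d → fibInf y = fibInf (y + d) := by
          intro y hy
          have hy2 : y + 2 ≤ F (v+3) := by omega
          have hyF : y < F (v+4) := by omega
          have h1 : fibInf (F (v+4) + y) = fibInf y := star2 (v+1) y hyF
          have h2 : F (v+4) + y = (y + d) + s := by omega
          have h3 : fibInf (y + d) = fibInf ((y + d) + s) := hper (y + d) (by omega)
          rw [← h1, h2, ← h3]
        obtain ⟨e, he1, heF, heF'⟩ := exists_window d hd1
        have hej : e + 1 ≤ v + 2 := by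
          have : e < v + 2 := F_lt_imp he1 (lt_of_le_of_lt heF hdlt)
          omega
        have hPB2 : ((F (v+3) - 1) + d) + 2 ≤ d + F (e+1) :=
          periodBound he1 heF heF' hperd
        have hle1 : F (e+1) ≤ F (v+2) := F_le hej
        have hle2 : F (v+2) ≤ F (v+3) := F_le (by omega)
        have hp3 : 1 ≤ F (v+3) := F_pos _
        omega
    · -- s = F (u+2) : c + 1 = F (u+1)
      refine ⟨u+1, ?_, by omega⟩
      have h2 : 2 ≤ F (u+1) := by omega
      by_contra h
      have : F (u+1) = 1 := F_le_one (by omega)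
      omega
    · -- s > F (u+2) : recurse
      have hcc : c + 2 ≤ F (u+1) := by omega
      have hu2 : 2 ≤ u := by
        by_contra hu
        have : F (u+1) ≤ 2 := F_le_two (by omega)
        omega
      obtain ⟨v, rfl⟩ : ∃ v, u = v + 2 := ⟨u - 2, by omega⟩
      have R3 : F (v+3) = F (v+2) + F (v+1) := F_add (v+1)
      have hsum' : s + c + 1 = F (v+5) := hsum
      have R5 : F (v+5) = F (v+4) + F (v+3) := F_add (v+3)
      have hgt' : F (v+4) < s := hgt
      have hcc' : c + 2 ≤ F (v+3) := hcc
      set s' := F (v+3) - 1 - c with hs'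
      have hs'sum : s' + c + 1 = F (v+3) := by omega
      have hsrel : s = F (v+4) + s' := by omega
      have hsuf' : ∀ x, x < c → fibInf (s' + x) = fibInf x := by
        intro x hx
        have h1 : fibInf (s + x) = fibInf x := hsuf x hx
        have h2 : s + x = F (v+4) + (s' + x) := by omega
        have hb : s' + x < F (v+4) := by
          have : F (v+3) ≤ F (v+4) := F_le (by omega)
          omega
        have h3 : fibInf (F (v+4) + (s' + x)) = fibInf (s' + x) := star2 (v+1) (s' + x) hb
        rw [h2, h3] at h1
        exact h1
      exact ih (v+3) (by omega) (by omega) c s' hc hs'sum hsuf'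

lemma fibPrefix_length (m : ℕ) : (fibPrefix m).length = m := by simp [fibPrefix]

lemma fibPrefix_getElem? {m i : ℕ} (h : i < m) : (fibPrefix m)[i]? = some (fibInf i) := by
  simp [fibPrefix, List.getElem?_map, List.getElem?_range h]

lemma fibPrefix_take {c L : ℕ} (h : c ≤ L) : (fibPrefix L).take c = fibPrefix c := by
  apply List.ext_getElem?
  intro i
  rw [List.getElem?_take]
  by_cases hi : i < c
  · rw [if_pos hi, fibPrefix_getElem? (by omega), fibPrefix_getElem? hi]
  · rw [if_neg hi]
    symm
    rw [List.getElem?_eq_none_iff, fibPrefix_length]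
    omega

lemma occ_extract {c L i : ℕ} (h : OccursAt (fibPrefix c) (fibPrefix L) i) :
    i + c ≤ L ∧ ∀ x, x < c → fibInf (i + x) = fibInf x := by
  obtain ⟨h1, h2⟩ := h
  rw [fibPrefix_length, fibPrefix_length] at h1
  refine ⟨h1, fun x hx => ?_⟩
  have h3 := congrArg (fun l => l[x]?) h2
  simp only [fibPrefix_length] at h3
  rw [List.getElem?_take, if_pos hx, List.getElem?_drop,
    fibPrefix_getElem? (show i + x < L by omega), fibPrefix_getElem? hx] at h3
  exact Option.some_injective _ h3

lemma superFib {k : ℕ} (hk : 4 ≤ k) : Superprimitive (fibPrefix (2 * F k - 1)) := by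
  obtain ⟨w, rfl⟩ : ∃ w, k = w + 4 := ⟨k - 4, by omega⟩
  have hF5 : 5 ≤ F (w+4) := le_trans (by rfl : 5 ≤ F 4) (F_le (by omega))
  set L := 2 * F (w+4) - 1 with hLdef
  rintro ⟨C, ⟨⟨i0, hocc0⟩, hcovall⟩, hlen⟩
  rw [fibPrefix_length] at hlen
  have hL9 : 9 ≤ L := by omega
  -- C is the prefix of length c
  obtain ⟨i, hocc, hi0, hi1⟩ := hcovall 0 (by rw [fibPrefix_length]; omega)
  have hi : i = 0 := by omega
  subst hi
  have hcle : C.length ≤ L := by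
    have := hocc.1
    rw [fibPrefix_length] at this
    omega
  have hC : C = fibPrefix C.length := by
    have h2 := hocc.2
    rw [List.drop_zero, fibPrefix_take hcle] at h2
    exact h2.symm
  obtain ⟨c, rfl⟩ : ∃ c, C = fibPrefix c := ⟨C.length, hC⟩
  rw [fibPrefix_length] at hcle hlen hi1
  have hcpos : 1 ≤ c := by omega
  -- occurrence covering the last position: border
  obtain ⟨i2, hocc2, hle2, hlt2⟩ := hcovall (L-1) (by rw [fibPrefix_length]; omega)
  rw [fibPrefix_length] at hlt2
  obtain ⟨hiL, hocceq⟩ := occ_extract hocc2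
  have hi2 : i2 + c = L := by omega
  -- step: c < F k
  have hcFk : c < F (w+4) := by
    by_contra hge
    push_neg at hge
    have hp0pos : 1 ≤ i2 := by omega
    obtain ⟨a, ha1, haF, haF'⟩ := exists_window i2 hp0pos
    have hak : a < w + 4 :=
      F_lt_imp ha1 (lt_of_le_of_lt haF (show i2 < F (w+4) by omega))
    have hPB : L + 2 ≤ i2 + F (a+1) := by
      have := periodBound ha1 haF haF' (m := L) (fun y hy => by
        have h5 := hocceq y (by omega)
        rw [Nat.add_comm i2 y] at h5
        exact h5.symm)
      omega
    have hF1 : F (a+1) ≤ F (w+4) := F_le (by omega)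
    omega
  -- suffix condition at level k
  set s := F (w+4) - 1 - c with hsdef
  have hssum : s + c + 1 = F (w+4) := by omega
  have hi2eq : i2 = F (w+4) + s := by omega
  have hsuf : ∀ x, x < c → fibInf (s + x) = fibInf x := by
    intro x hx
    have h1 := hocceq x hx
    have h2 : i2 + x = F (w+4) + (s + x) := by omega
    rw [h2] at h1
    have h3 : fibInf (F (w+4) + (s + x)) = fibInf (s + x) :=
      star2 (w+1) (s + x) (show s + x < F (w+4) by omega)
    rw [h3] at h1
    exact h1
  obtain ⟨i3, hi3_2, hi3F⟩ := chain (w+4) (by omega) c s hcpos hssum hsuf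
  -- final: position c cannot be covered
  obtain ⟨o, hocc3, hole, holt⟩ := hcovall c (by rw [fibPrefix_length]; omega)
  rw [fibPrefix_length] at holt
  obtain ⟨hoL, hocceq3⟩ := occ_extract hocc3
  have hopos : 1 ≤ o := by omega
  obtain ⟨e, he1, heF, heF'⟩ := exists_window o hopos
  have hei : e < i3 := F_lt_imp he1 (by omega)
  have hPB := periodBound he1 heF heF' (m := o + c) (fun y hy => by
    have h5 := hocceq3 y (by omega)
    rw [Nat.add_comm o y] at h5
    exact h5.symm)
  have hFe : F (e+1) ≤ F i3 := F_le (by omega)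
  omega

lemma coverSelf (L : ℕ) : IsCover (fibPrefix L) (fibPrefix L) := by
  constructor
  · exact ⟨0, by simp [OccursAt]⟩
  · intro q hq
    exact ⟨0, ⟨by simp, by simp⟩, by omega, by simpa using hq⟩

/-- For every `k ≥ 4`, `Cov_Fib[2F_k - 1] = 2F_k - 1`; that is, the prefix of
the infinite Fibonacci word of length `2F_k - 1` is superprimitive. -/
theorem stmt8 (k : ℕ) (hk : 4 ≤ k) :
    covFib (2 * F k - 1) = 2 * F k - 1 ∧ Superprimitive (fibPrefix (2 * F k - 1)) := by
  have hsup := superFib hk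
  refine ⟨?_, hsup⟩
  unfold covFib covLen
  have hmem : (2 * F k - 1) ∈
      {c | ∃ C : List Bool, C.length = c ∧ IsCover C (fibPrefix (2 * F k - 1))} :=
    ⟨fibPrefix (2 * F k - 1), fibPrefix_length _, coverSelf _⟩
  apply le_antisymm
  · exact Nat.sInf_le hmem
  · apply le_csInf ⟨_, hmem⟩
    rintro b ⟨C, hlenC, hcov⟩
    by_contra hb
    push_neg at hb
    exact hsup ⟨C, hcov, by rw [fibPrefix_length]; omega⟩
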